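/- The weighted-configuration identity holds for g = 5 and w = 1: for any set S of 5 distinct real numbers, the sum over all weighted configurations of S with total weight 1 of their evaluations is zero. -/

import Mathlib

open Finset Polynomial

/-- The unsigned Stirling number of the first kind `[n, k]`, defined as the coefficient of
`x^k` in the ascending factorial `x (x+1) ⋯ (x+n-1)`. -/
noncomputable def stirling1 (n k : ℕ) : ℕ := (ascPochhammer ℕ n).coeff k

/-- `IsStirlingPoly P` says that for every `w`, `P w` is the (unique) real polynomial of degree
at most `2w` with `(P w).eval n = [n, n-w]` (unsigned Stirling number of the first kind) for
every integer `n ≥ w`; i.e. `P w` plays the role of `P_w` from the paper. -/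
def IsStirlingPoly (P : ℕ → Polynomial ℝ) : Prop :=
  ∀ w : ℕ, (P w).natDegree ≤ 2 * w ∧
    ∀ n : ℕ, w ≤ n → (P w).eval (n : ℝ) = (stirling1 n (n - w) : ℝ)

lemma stirling1_self (n : ℕ) : stirling1 n n = 1 := by
  have h := (monic_ascPochhammer ℕ n).coeff_natDegree
  rwa [ascPochhammer_natDegree] at h

lemma stirling1_sub_one (n : ℕ) : stirling1 (n+1) n = (n+1).choose 2 := by
  induction n with
  | zero => simp [stirling1]
  | succ n ih =>
    unfold stirling1 at *
    rw [ascPochhammer_succ_right, mul_add, coeff_add, coeff_mul_X, ← C_eq_natCast,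
      coeff_mul_C, ih]
    have h1 : (ascPochhammer ℕ (n+1)).coeff (n+1) = 1 := stirling1_self (n+1)
    rw [h1, one_mul, Nat.cast_id, Nat.choose_succ_succ (n+1) 1]
    simp [Nat.choose_one_right]
    omega

lemma P0_eval (P : ℕ → Polynomial ℝ) (hP : IsStirlingPoly P) (x : ℝ) : (P 0).eval x = 1 := by
  obtain ⟨hdeg, heval⟩ := hP 0
  have h0 : P 0 = C ((P 0).coeff 0) := (Polynomial.eq_C_of_natDegree_le_zero (by simpa using hdeg))
  have h1 := heval 0 le_rfl
  rw [h0] at h1 ⊢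
  simp only [eval_C] at h1 ⊢
  rw [h1]
  simp [stirling1_self]

lemma P1_eval (P : ℕ → Polynomial ℝ) (hP : IsStirlingPoly P) (x : ℝ) :
    (P 1).eval x = (x^2 - x)/2 := by
  obtain ⟨hdeg, heval⟩ := hP 1
  have key : P 1 = C (1/2) * (X^2 - X) := by
    have h : P 1 - C (1/2) * (X^2 - X) = 0 := by
      apply Polynomial.eq_zero_of_infinite_isRoot
      apply Set.Infinite.mono (s := Set.range (fun n : ℕ => ((n+1 : ℕ) : ℝ)))
      · rintro x ⟨n, rfl⟩
        simp only [Set.mem_setOf_eq, IsRoot, eval_sub, eval_mul, eval_C, eval_pow, eval_X]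
        rw [heval (n+1) (by omega)]
        have h2 : stirling1 (n+1) (n+1-1) = (n+1).choose 2 := by
          simpa using stirling1_sub_one n
        rw [h2, Nat.cast_choose_two]
        push_cast
        ring
      · apply Set.infinite_range_of_injective
        intro a b hab
        have : ((a:ℝ)+1) = ((b:ℝ)+1) := by push_cast at hab; exact hab
        exact_mod_cast (by linarith : (a:ℝ) = b)
    exact sub_eq_zero.mp h
  rw [key]
  simp only [eval_mul, eval_C, eval_sub, eval_pow, eval_X]
  ring

-- alternating sum over powerset, real version
lemma neg_one_pow_powerset {ι : Type*} [DecidableEq ι] (x : Finset ι) :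
    (∑ m ∈ x.powerset, (-1 : ℝ) ^ m.card) = if x = ∅ then 1 else 0 := by
  have h := Finset.sum_powerset_neg_one_pow_card (x := x)
  have := congrArg (fun z : ℤ => (z : ℝ)) h
  push_cast at this
  rw [this]

lemma L0 {ι : Type*} [DecidableEq ι] (U B : Finset ι) (hB : B ⊆ U) :
    (∑ K ∈ U.powerset.filter (fun K => B ⊆ K), (-1 : ℝ) ^ K.card)
      = if B = U then (-1 : ℝ) ^ U.card else 0 := by
  have key : (∑ K ∈ U.powerset.filter (fun K => B ⊆ K), (-1 : ℝ) ^ K.card)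
      = ∑ C ∈ (U \ B).powerset, (-1 : ℝ) ^ (B ∪ C).card := by
    apply Finset.sum_nbij' (fun K => K \ B) (fun C => B ∪ C)
    · intro K hK
      simp only [mem_filter, mem_powerset] at hK
      exact mem_powerset.2 (sdiff_subset_sdiff hK.1 le_rfl)
    · intro C hC
      simp only [mem_powerset] at hC
      refine mem_filter.2 ⟨mem_powerset.2 (union_subset hB (hC.trans sdiff_subset)), subset_union_left⟩
    · intro K hK
      simp only [mem_filter, mem_powerset] at hK
      rw [union_sdiff_of_subset hK.2]
    · intro C hC
      simp only [mem_powerset] at hC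
      rw [union_sdiff_cancel_left]
      exact disjoint_of_subset_right hC disjoint_sdiff
    · intro K hK
      simp only [mem_filter, mem_powerset] at hK
      rw [union_sdiff_of_subset hK.2]
  rw [key]
  have hdisj : ∀ C ∈ (U \ B).powerset, (B ∪ C).card = B.card + C.card := by
    intro C hC
    simp only [mem_powerset] at hC
    rw [card_union_of_disjoint]
    exact disjoint_of_subset_right hC disjoint_sdiff
  rw [Finset.sum_congr rfl (fun C hC => by rw [hdisj C hC, pow_add])]
  rw [← Finset.mul_sum, neg_one_pow_powerset]
  by_cases h : B = U
  · subst h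
    simp
  · have : U \ B ≠ ∅ := by
      rw [Ne, sdiff_eq_empty_iff_subset]
      intro h2
      exact h (subset_antisymm hB h2)
    rw [if_neg this, if_neg h, mul_zero]

open scoped Classical in
noncomputable def WCdecomp (S : Finset ℝ) (r : ℕ) (K : Finset (Fin r)) :
    Finset (Fin r → Finset ℝ) :=
  (Fintype.piFinset fun _ : Fin r => S.powerset).filter
    (fun p => (∀ i j, i ≠ j → Disjoint (p i) (p j)) ∧
      (Finset.univ.biUnion p = S) ∧ ∀ i ∉ K, p i = ∅)

lemma mem_WCdecomp {S : Finset ℝ} {r : ℕ} {K : Finset (Fin r)} {p : Fin r → Finset ℝ} :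
    p ∈ WCdecomp S r K ↔ (∀ i, p i ⊆ S) ∧ (∀ i j, i ≠ j → Disjoint (p i) (p j)) ∧
      (Finset.univ.biUnion p = S) ∧ ∀ i ∉ K, p i = ∅ := by
  classical
  simp [WCdecomp, Fintype.mem_piFinset, Finset.mem_powerset, and_assoc]

lemma WCdecomp_card (r : ℕ) (K : Finset (Fin r)) (S : Finset ℝ) :
    (WCdecomp S r K).card = K.card ^ S.card := by
  classical
  induction S using Finset.induction_on with
  | empty =>
    have : WCdecomp ∅ r K = {fun _ => (∅ : Finset ℝ)} := by
      ext p
      rw [mem_WCdecomp, mem_singleton]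
      constructor
      · rintro ⟨h1, -, -, -⟩
        funext i
        exact subset_empty.mp (h1 i)
      · rintro rfl
        exact ⟨fun i => subset_rfl, fun i j _ => disjoint_empty_left _, by simp [Finset.eq_empty_iff_forall_notMem], fun i _ => rfl⟩
    rw [this]
    simp
  | @insert a s ha ih =>
    have main : (K ×ˢ WCdecomp s r K).card = (WCdecomp (insert a s) r K).card := by
      apply card_bij (fun jq _ => Function.update jq.2 jq.1 (insert a (jq.2 jq.1)))
      · rintro ⟨j, q⟩ hjq
        rw [mem_product] at hjq
        obtain ⟨hj, hq⟩ := hjq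
        rw [mem_WCdecomp] at hq ⊢
        dsimp only at *
        obtain ⟨hsub, hdisj, hcov, hsupp⟩ := hq
        have hnq : ∀ i, a ∉ q i := fun i hi => ha (hsub i hi)
        have hcov' : ∀ x, x ∈ s ↔ ∃ i, x ∈ q i := by
          intro x
          rw [← hcov]
          simp [mem_biUnion]
        refine ⟨?_, ?_, ?_, ?_⟩
        · intro i
          rcases eq_or_ne i j with rfl | h
          · rw [Function.update_self]
            exact insert_subset_insert _ (hsub i)
          · rw [Function.update_of_ne h]
            exact (hsub i).trans (subset_insert _ _)
        · intro i i' hne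
          rcases eq_or_ne i j with rfl | h
          · rw [Function.update_self, Function.update_of_ne (Ne.symm hne), disjoint_insert_left]
            exact ⟨hnq i', hdisj i i' hne⟩
          · rw [Function.update_of_ne h]
            rcases eq_or_ne i' j with rfl | h'
            · rw [Function.update_self, disjoint_insert_right]
              exact ⟨hnq i, hdisj i i' hne⟩
            · rw [Function.update_of_ne h']
              exact hdisj i i' hne
        · ext x
          simp only [mem_biUnion, mem_univ, true_and, Function.update_apply, mem_insert]
          constructor
          · rintro ⟨i, hx⟩
            split_ifs at hx with h
            · rcases mem_insert.mp hx with rfl | hx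
              · exact Or.inl rfl
              · exact Or.inr ((hcov' x).mpr ⟨j, h ▸ hx⟩)
            · exact Or.inr ((hcov' x).mpr ⟨i, hx⟩)
          · rintro (rfl | hx)
            · exact ⟨j, by simp⟩
            · obtain ⟨i, hi⟩ := (hcov' x).mp hx
              refine ⟨i, ?_⟩
              split_ifs with h
              · exact mem_insert_of_mem (h ▸ hi)
              · exact hi
        · intro i hi
          have : i ≠ j := fun h => hi (h ▸ hj)
          rw [Function.update_of_ne this]
          exact hsupp i hi
      · rintro ⟨j1, q1⟩ h1 ⟨j2, q2⟩ h2 heq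
        rw [mem_product] at h1 h2
        obtain ⟨hj1, hq1⟩ := h1
        obtain ⟨hj2, hq2⟩ := h2
        rw [mem_WCdecomp] at hq1 hq2
        dsimp only at *
        have hnq1 : ∀ i, a ∉ q1 i := fun i hi => ha (hq1.1 i hi)
        have hnq2 : ∀ i, a ∉ q2 i := fun i hi => ha (hq2.1 i hi)
        have hj : j1 = j2 := by
          by_contra hne
          have h1 := congrFun heq j1
          rw [Function.update_self, Function.update_of_ne hne] at h1
          exact hnq2 j1 (h1 ▸ mem_insert_self a (q1 j1))
        subst hj
        have hq : q1 = q2 := by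
          funext i
          rcases eq_or_ne i j1 with rfl | h
          · have h1 := congrFun heq i
            rw [Function.update_self, Function.update_self] at h1
            rw [← erase_insert (hnq1 i), h1, erase_insert (hnq2 i)]
          · have h1 := congrFun heq i
            rwa [Function.update_of_ne h, Function.update_of_ne h] at h1
        rw [hq]
      · intro p hp
        rw [mem_WCdecomp] at hp
        obtain ⟨hsub, hdisj, hcov, hsupp⟩ := hp
        have haS : a ∈ Finset.univ.biUnion p := by
          rw [hcov]; exact mem_insert_self a s
        obtain ⟨j, -, haj⟩ := mem_biUnion.mp haS
        have hjK : j ∈ K := by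
          by_contra h
          rw [hsupp j h] at haj
          exact notMem_empty a haj
        have hnpi : ∀ i, i ≠ j → a ∉ p i := by
          intro i hi hai
          exact disjoint_left.mp (hdisj i j hi) hai haj
        refine ⟨⟨j, fun i => (p i).erase a⟩, ?_, ?_⟩
        · rw [mem_product]
          dsimp only
          refine ⟨hjK, mem_WCdecomp.mpr ⟨?_, ?_, ?_, ?_⟩⟩
          · intro i x hx
            obtain ⟨hxa, hxp⟩ := mem_erase.mp hx
            rcases mem_insert.mp (hsub i hxp) with rfl | h
            · exact absurd rfl hxa
            · exact h
          · intro i i' hne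
            exact (hdisj i i' hne).mono (erase_subset _ _) (erase_subset _ _)
          · ext x
            simp only [mem_biUnion, mem_univ, true_and, mem_erase]
            constructor
            · rintro ⟨i, hxa, hxp⟩
              rcases mem_insert.mp (hsub i hxp) with rfl | h
              · exact absurd rfl hxa
              · exact h
            · intro hx
              have : x ∈ Finset.univ.biUnion p := by
                rw [hcov]; exact mem_insert_of_mem hx
              obtain ⟨i, -, hi⟩ := mem_biUnion.mp this
              exact ⟨i, fun h => ha (h ▸ hx), hi⟩
          · intro i hi
            rw [hsupp i hi, erase_empty]
        · dsimp only
          funext i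
          rcases eq_or_ne i j with rfl | h
          · rw [Function.update_self]
            exact insert_erase haj
          · rw [Function.update_of_ne h]
            exact erase_eq_of_notMem (hnpi i h)
    rw [card_insert_of_notMem ha, pow_succ, ← ih, ← main, card_product, mul_comm]

open scoped Classical in
lemma WCdecomp_fiber (S : Finset ℝ) (r : ℕ) (K : Finset (Fin r)) (j : Fin r) (hj : j ∈ K)
    (A : Finset ℝ) (hA : A ⊆ S) :
    ((WCdecomp S r K).filter (fun p => p j = A)).card
      = (WCdecomp (S \ A) r (K.erase j)).card := by
  apply card_bij (fun p _ => Function.update p j ∅)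
  · intro p hp
    rw [mem_filter, mem_WCdecomp] at hp
    obtain ⟨⟨hsub, hdisj, hcov, hsupp⟩, hpj⟩ := hp
    rw [mem_WCdecomp]
    refine ⟨?_, ?_, ?_, ?_⟩
    · intro i x hx
      rcases eq_or_ne i j with rfl | h
      · rw [Function.update_self] at hx
        exact absurd hx (notMem_empty x)
      · rw [Function.update_of_ne h] at hx
        refine mem_sdiff.mpr ⟨hsub i hx, fun hxA => ?_⟩
        exact disjoint_left.mp (hdisj i j h) hx (hpj ▸ hxA)
    · intro i i' hne
      have hsubu : ∀ i, Function.update p j ∅ i ⊆ p i := by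
        intro i
        rcases eq_or_ne i j with rfl | h
        · rw [Function.update_self]; exact empty_subset _
        · rw [Function.update_of_ne h]
      exact (hdisj i i' hne).mono (hsubu i) (hsubu i')
    · ext x
      simp only [mem_biUnion, mem_univ, true_and, mem_sdiff]
      constructor
      · rintro ⟨i, hx⟩
        rcases eq_or_ne i j with rfl | h
        · rw [Function.update_self] at hx
          exact absurd hx (notMem_empty x)
        · rw [Function.update_of_ne h] at hx
          refine ⟨hsub i hx, fun hxA => ?_⟩
          exact disjoint_left.mp (hdisj i j h) hx (hpj ▸ hxA)
      · rintro ⟨hxS, hxA⟩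
        have : x ∈ Finset.univ.biUnion p := hcov ▸ hxS
        obtain ⟨i, -, hi⟩ := mem_biUnion.mp this
        have hij : i ≠ j := fun h => hxA (hpj ▸ h ▸ hi)
        exact ⟨i, by rwa [Function.update_of_ne hij]⟩
    · intro i hi
      rcases eq_or_ne i j with rfl | h
      · rw [Function.update_self]
      · rw [Function.update_of_ne h]
        exact hsupp i (fun hK => hi (mem_erase.mpr ⟨h, hK⟩))
  · intro p1 h1 p2 h2 heq
    rw [mem_filter] at h1 h2
    funext i
    rcases eq_or_ne i j with rfl | h
    · rw [h1.2, h2.2]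
    · have := congrFun heq i
      rwa [Function.update_of_ne h, Function.update_of_ne h] at this
  · intro q hq
    rw [mem_WCdecomp] at hq
    obtain ⟨hsub, hdisj, hcov, hsupp⟩ := hq
    have hqj : q j = ∅ := hsupp j (notMem_erase j K)
    refine ⟨Function.update q j A, ?_, ?_⟩
    · rw [mem_filter, mem_WCdecomp]
      refine ⟨⟨?_, ?_, ?_, ?_⟩, by rw [Function.update_self]⟩
      · intro i
        rcases eq_or_ne i j with rfl | h
        · rw [Function.update_self]; exact hA
        · rw [Function.update_of_ne h]
          exact (hsub i).trans sdiff_subset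
      · intro i i' hne
        rcases eq_or_ne i j with rfl | h
        · rw [Function.update_self, Function.update_of_ne (Ne.symm hne)]
          exact disjoint_right.mpr (fun x hx => (mem_sdiff.mp (hsub i' hx)).2)
        · rw [Function.update_of_ne h]
          rcases eq_or_ne i' j with rfl | h'
          · rw [Function.update_self]
            exact disjoint_left.mpr (fun x hx => (mem_sdiff.mp (hsub i hx)).2)
          · rw [Function.update_of_ne h']
            exact hdisj i i' hne
      · ext x
        simp only [mem_biUnion, mem_univ, true_and]
        constructor
        · rintro ⟨i, hx⟩
          rcases eq_or_ne i j with rfl | h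
          · rw [Function.update_self] at hx
            exact hA hx
          · rw [Function.update_of_ne h] at hx
            exact (mem_sdiff.mp (hsub i hx)).1
        · intro hx
          by_cases hxA : x ∈ A
          · exact ⟨j, by rwa [Function.update_self]⟩
          · have : x ∈ Finset.univ.biUnion q := hcov ▸ mem_sdiff.mpr ⟨hx, hxA⟩
            obtain ⟨i, -, hi⟩ := mem_biUnion.mp this
            have hij : i ≠ j := fun h => by rw [h, hqj] at hi; exact notMem_empty x hi
            exact ⟨i, by rwa [Function.update_of_ne hij]⟩
      · intro i hi
        have hij : i ≠ j := fun h => hi (h ▸ hj)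
        rw [Function.update_of_ne hij]
        exact hsupp i (fun hK => hi (mem_of_mem_erase hK))
    · funext i
      rcases eq_or_ne i j with rfl | h
      · rw [Function.update_self, hqj]
      · rw [Function.update_of_ne h, Function.update_of_ne h]

open scoped Classical in
lemma WCdecomp_sum_part (S : Finset ℝ) (r : ℕ) (K : Finset (Fin r)) (j : Fin r) (hj : j ∈ K)
    (F : Finset ℝ → ℝ) :
    ∑ p ∈ WCdecomp S r K, F (p j)
      = ∑ A ∈ S.powerset, (((K.card - 1) ^ (S.card - A.card) : ℕ) : ℝ) * F A := by
  have hmaps : ∀ p ∈ WCdecomp S r K, p j ∈ S.powerset := by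
    intro p hp
    exact mem_powerset.mpr ((mem_WCdecomp.mp hp).1 j)
  rw [← Finset.sum_fiberwise_of_maps_to' hmaps F]
  apply Finset.sum_congr rfl
  intro A hA
  rw [Finset.sum_const, WCdecomp_fiber S r K j hj A (mem_powerset.mp hA), WCdecomp_card,
    card_erase_of_mem hj, card_sdiff_of_subset (mem_powerset.mp hA), nsmul_eq_mul]

noncomputable def phiR (t : ℝ) : ℝ := (t^2 - t)/2

open scoped Classical in
lemma WCdecomp_sum_V (S : Finset ℝ) (r : ℕ) (K : Finset (Fin r)) :
    ∑ p ∈ WCdecomp S r K, ∑ j : Fin r, phiR (∑ c ∈ p j, c)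
      = (K.card : ℝ) * ∑ A ∈ S.powerset,
          (((K.card - 1) ^ (S.card - A.card) : ℕ) : ℝ) * phiR (∑ c ∈ A, c) := by
  rw [Finset.sum_comm]
  have hj0 : ∀ j : Fin r, j ∉ K → ∑ p ∈ WCdecomp S r K, phiR (∑ c ∈ p j, c) = 0 := by
    intro j hj
    apply Finset.sum_eq_zero
    intro p hp
    rw [(mem_WCdecomp.mp hp).2.2.2 j hj]
    simp [phiR]
  calc (∑ j : Fin r, ∑ p ∈ WCdecomp S r K, phiR (∑ c ∈ p j, c))
      = ∑ j ∈ K, ∑ p ∈ WCdecomp S r K, phiR (∑ c ∈ p j, c) :=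
        (Finset.sum_subset (subset_univ K) (fun j _ hj => hj0 j hj)).symm
    _ = ∑ _j ∈ K, ∑ A ∈ S.powerset,
          (((K.card - 1) ^ (S.card - A.card) : ℕ) : ℝ) * phiR (∑ c ∈ A, c) :=
        Finset.sum_congr rfl (fun j hj => WCdecomp_sum_part S r K j hj (fun A => phiR (∑ c ∈ A, c)))
    _ = _ := by rw [Finset.sum_const, nsmul_eq_mul]

open scoped Classical in
lemma WCdecomp_eq_filter (S : Finset ℝ) (r : ℕ) (K : Finset (Fin r)) :
    WCdecomp S r K = (WCdecomp S r Finset.univ).filter (fun p => ∀ i ∉ K, p i = ∅) := by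
  ext p
  simp only [mem_filter, mem_WCdecomp]
  constructor
  · rintro ⟨h1, h2, h3, h4⟩
    exact ⟨⟨h1, h2, h3, fun i hi => absurd (mem_univ i) hi⟩, h4⟩
  · rintro ⟨⟨h1, h2, h3, -⟩, h4⟩
    exact ⟨h1, h2, h3, h4⟩

open scoped Classical in
lemma IE (S : Finset ℝ) (r : ℕ) :
    ∑ p ∈ (WCdecomp S r Finset.univ).filter (fun p => ∀ i, (p i).Nonempty),
        ∑ j : Fin r, phiR (∑ c ∈ p j, c)
      = ∑ K ∈ (Finset.univ : Finset (Fin r)).powerset,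
          (-1 : ℝ)^(r + K.card) * ∑ p ∈ WCdecomp S r K, ∑ j : Fin r, phiR (∑ c ∈ p j, c) := by
  have step1 : ∀ K : Finset (Fin r),
      ((-1 : ℝ)^(r + K.card) * ∑ p ∈ WCdecomp S r K, ∑ j : Fin r, phiR (∑ c ∈ p j, c))
        = ∑ p ∈ WCdecomp S r Finset.univ,
            (-1 : ℝ)^(r + K.card) *
              (if ∀ i ∉ K, p i = ∅ then ∑ j : Fin r, phiR (∑ c ∈ p j, c) else 0) := by
    intro K
    rw [WCdecomp_eq_filter S r K, Finset.sum_filter, Finset.mul_sum]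
  symm
  calc (∑ K ∈ (Finset.univ : Finset (Fin r)).powerset,
          (-1 : ℝ)^(r + K.card) * ∑ p ∈ WCdecomp S r K, ∑ j : Fin r, phiR (∑ c ∈ p j, c))
      = ∑ K ∈ (Finset.univ : Finset (Fin r)).powerset, ∑ p ∈ WCdecomp S r Finset.univ,
          (-1 : ℝ)^(r + K.card) *
            (if ∀ i ∉ K, p i = ∅ then ∑ j : Fin r, phiR (∑ c ∈ p j, c) else 0) :=
        Finset.sum_congr rfl (fun K _ => step1 K)
    _ = ∑ p ∈ WCdecomp S r Finset.univ, ∑ K ∈ (Finset.univ : Finset (Fin r)).powerset,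
          (-1 : ℝ)^(r + K.card) *
            (if ∀ i ∉ K, p i = ∅ then ∑ j : Fin r, phiR (∑ c ∈ p j, c) else 0) :=
        Finset.sum_comm
    _ = ∑ p ∈ WCdecomp S r Finset.univ,
          (if ∀ i, (p i).Nonempty then ∑ j : Fin r, phiR (∑ c ∈ p j, c) else 0) := by
        apply Finset.sum_congr rfl
        intro p hp
        set V := ∑ j : Fin r, phiR (∑ c ∈ p j, c) with hV
        set B : Finset (Fin r) := Finset.univ.filter (fun i => p i ≠ ∅) with hB
        have hiff : ∀ K : Finset (Fin r), (∀ i ∉ K, p i = ∅) ↔ B ⊆ K := by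
          intro K
          constructor
          · intro h x hx
            rw [hB, mem_filter] at hx
            by_contra hxK
            exact hx.2 (h x hxK)
          · intro h i hi
            by_contra hne
            exact hi (h (by rw [hB, mem_filter]; exact ⟨mem_univ i, hne⟩))
        have hBuniv : B = Finset.univ ↔ ∀ i, (p i).Nonempty := by
          rw [hB, Finset.filter_eq_self]
          simp [Finset.nonempty_iff_ne_empty]
        have key : (∑ K ∈ (Finset.univ : Finset (Fin r)).powerset,
            (-1 : ℝ)^(r + K.card) * (if ∀ i ∉ K, p i = ∅ then V else 0))
            = (-1 : ℝ)^r * (if B = Finset.univ then (-1 : ℝ)^r else 0) * V := by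
          have hterm : ∀ K ∈ (Finset.univ : Finset (Fin r)).powerset,
              (-1 : ℝ)^(r + K.card) * (if ∀ i ∉ K, p i = ∅ then V else 0)
              = (-1 : ℝ)^r * ((if B ⊆ K then (-1 : ℝ)^K.card else 0) * V) := by
            intro K _
            rw [pow_add]
            by_cases h : B ⊆ K
            · rw [if_pos h, if_pos ((hiff K).mpr h)]
              ring
            · rw [if_neg h, if_neg (fun hh => h ((hiff K).mp hh))]
              ring
          rw [Finset.sum_congr rfl hterm, ← Finset.mul_sum, ← Finset.sum_mul]
          rw [← Finset.sum_filter, L0 Finset.univ B (subset_univ B)]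
          rw [Finset.card_univ, Fintype.card_fin]
          ring
        rw [key]
        by_cases h : ∀ i, (p i).Nonempty
        · rw [if_pos h, if_pos (hBuniv.mpr h), ← pow_add]
          rw [Even.neg_one_pow ⟨r, rfl⟩, one_mul]
        · rw [if_neg h, if_neg (fun hh => h (hBuniv.mp hh))]
          ring
    _ = ∑ p ∈ (WCdecomp S r Finset.univ).filter (fun p => ∀ i, (p i).Nonempty),
          ∑ j : Fin r, phiR (∑ c ∈ p j, c) := (Finset.sum_filter _ _).symm

open scoped Classical in
lemma stepA (P : ℕ → Polynomial ℝ) (hP : IsStirlingPoly P) (S : Finset ℝ) (r : ℕ) :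
    ∑ f ∈ (Fintype.piFinset fun _ : Fin r => S.powerset ×ˢ Finset.range 2).filter
        (fun f => (∀ i, ((f i).1).Nonempty) ∧
          (∀ i j, i ≠ j → Disjoint (f i).1 (f j).1) ∧
          (Finset.univ.biUnion fun i => (f i).1) = S ∧
          ∑ i, (f i).2 = 1),
      ∏ i, (P (f i).2).eval (∑ c ∈ (f i).1, c)
    = ∑ p ∈ (WCdecomp S r Finset.univ).filter (fun p => ∀ i, (p i).Nonempty),
        ∑ j : Fin r, phiR (∑ c ∈ p j, c) := by
  rw [← Finset.sum_product' (s := (WCdecomp S r Finset.univ).filter (fun p => ∀ i, (p i).Nonempty))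
    (t := (Finset.univ : Finset (Fin r)))]
  symm
  apply Finset.sum_bij (fun pj _ => fun i => (pj.1 i, if i = pj.2 then 1 else 0))
  · rintro ⟨p, j⟩ hpj
    rw [mem_product, mem_filter, mem_WCdecomp] at hpj
    obtain ⟨⟨⟨hsub, hdisj, hcov, -⟩, hne⟩, -⟩ := hpj
    rw [mem_filter]
    refine ⟨?_, fun i => hne i, fun i i' h => hdisj i i' h, hcov, ?_⟩
    · rw [Fintype.mem_piFinset]
      intro i
      rw [mem_product]
      exact ⟨mem_powerset.mpr (hsub i), by split <;> simp⟩
    · simp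
  · rintro ⟨p1, j1⟩ h1 ⟨p2, j2⟩ h2 heq
    have hfst : p1 = p2 := funext fun i => congrArg Prod.fst (congrFun heq i)
    have hsnd := congrArg Prod.snd (congrFun heq j1)
    simp only [if_pos rfl] at hsnd
    have : j1 = j2 := by
      by_contra hne
      rw [if_neg hne] at hsnd
      exact one_ne_zero hsnd
    rw [Prod.ext_iff]
    exact ⟨hfst, this⟩
  · intro f hf
    rw [mem_filter, Fintype.mem_piFinset] at hf
    obtain ⟨hpi, hne, hdisj, hcov, hsum⟩ := hf
    have hlt : ∀ i, (f i).2 < 2 := fun i => mem_range.mp (mem_product.mp (hpi i)).2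
    have hex : ∃ j, (f j).2 = 1 := by
      by_contra h
      push_neg at h
      have : ∀ i ∈ (Finset.univ : Finset (Fin r)), (f i).2 = 0 := by
        intro i _
        have := hlt i
        have := h i
        omega
      rw [Finset.sum_eq_zero this] at hsum
      exact one_ne_zero hsum.symm
    obtain ⟨j, hj⟩ := hex
    have hzero : ∀ i, i ≠ j → (f i).2 = 0 := by
      intro i hi
      have herase : ∑ x ∈ Finset.univ.erase j, (f x).2 = 0 := by
        have h2 := Finset.add_sum_erase Finset.univ (fun x => (f x).2) (mem_univ j)
        simp only [hj] at h2
        rw [hsum] at h2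
        omega
      exact (Finset.sum_eq_zero_iff.mp herase) i (mem_erase.mpr ⟨hi, mem_univ i⟩)
    refine ⟨⟨fun i => (f i).1, j⟩, ?_, ?_⟩
    · rw [mem_product, mem_filter, mem_WCdecomp]
      exact ⟨⟨⟨fun i => mem_powerset.mp (mem_product.mp (hpi i)).1, hdisj, hcov,
        fun i hi => absurd (mem_univ i) hi⟩, hne⟩, mem_univ j⟩
    · funext i
      rcases eq_or_ne i j with rfl | h
      · rw [if_pos rfl]
        exact Prod.ext rfl hj.symm
      · rw [if_neg h]
        exact Prod.ext rfl (hzero i h).symm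
  · rintro ⟨p, j⟩ hpj
    dsimp only
    rw [Finset.prod_eq_single j]
    · rw [if_pos rfl, P1_eval P hP]
      rfl
    · intro i _ hi
      rw [if_neg hi, P0_eval P hP]
    · intro h
      exact absurd (mem_univ j) h

open scoped Classical in
lemma subsum_zero (S : Finset ℝ) (B : Finset ℝ) (hB : B ⊆ S) (hne : B ≠ S) :
    ∑ A ∈ S.powerset, (if B ⊆ A then (-1 : ℝ)^A.card else 0) = 0 := by
  rw [← Finset.sum_filter, L0 S B hB, if_neg hne]

open scoped Classical in
lemma alt_sum_zero (S : Finset ℝ) (hS : S.card = 5) :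
    ∑ A ∈ S.powerset, (-1 : ℝ)^A.card * phiR (∑ c ∈ A, c) = 0 := by
  have M1 : ∑ A ∈ S.powerset, (-1 : ℝ)^A.card * (∑ c ∈ A, c) = 0 := by
    calc ∑ A ∈ S.powerset, (-1 : ℝ)^A.card * (∑ c ∈ A, c)
        = ∑ A ∈ S.powerset, ∑ c ∈ S, (if {c} ⊆ A then (-1 : ℝ)^A.card else 0) * c := by
          apply Finset.sum_congr rfl
          intro A hA
          rw [Finset.mul_sum]
          have : ∑ c ∈ S, (if {c} ⊆ A then (-1 : ℝ)^A.card else 0) * c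
              = ∑ c ∈ S, (if c ∈ A then (-1 : ℝ)^A.card * c else 0) := by
            apply Finset.sum_congr rfl
            intro c _
            simp only [singleton_subset_iff]
            split <;> ring
          rw [this, Finset.sum_ite_mem, inter_eq_right.mpr (mem_powerset.mp hA)]
      _ = ∑ c ∈ S, (∑ A ∈ S.powerset, (if {c} ⊆ A then (-1 : ℝ)^A.card else 0)) * c := by
          rw [Finset.sum_comm]
          exact Finset.sum_congr rfl fun c _ => (Finset.sum_mul _ _ _).symm
      _ = 0 := by
          apply Finset.sum_eq_zero
          intro c hc
          rw [subsum_zero S {c} (singleton_subset_iff.mpr hc)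
            (fun h => by rw [← h] at hS; simp at hS), zero_mul]
  have M2 : ∑ A ∈ S.powerset, (-1 : ℝ)^A.card * (∑ c ∈ A, c)^2 = 0 := by
    calc ∑ A ∈ S.powerset, (-1 : ℝ)^A.card * (∑ c ∈ A, c)^2
        = ∑ A ∈ S.powerset, ∑ c ∈ S, ∑ d ∈ S,
            (if insert c {d} ⊆ A then (-1 : ℝ)^A.card else 0) * (c * d) := by
          apply Finset.sum_congr rfl
          intro A hA
          have hA' := mem_powerset.mp hA
          rw [sq, Finset.sum_mul_sum, Finset.mul_sum]
          have outer : ∀ c, (∑ d ∈ S, (if insert c {d} ⊆ A then (-1 : ℝ)^A.card else 0) * (c * d))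
              = if c ∈ A then ∑ d ∈ A, (-1 : ℝ)^A.card * (c * d) else 0 := by
            intro c
            by_cases hc : c ∈ A
            · rw [if_pos hc]
              have : ∀ d ∈ S, (if insert c {d} ⊆ A then (-1 : ℝ)^A.card else 0) * (c * d)
                  = if d ∈ A then (-1 : ℝ)^A.card * (c * d) else 0 := by
                intro d _
                simp only [insert_subset_iff, singleton_subset_iff]
                by_cases hd : d ∈ A
                · rw [if_pos ⟨hc, hd⟩, if_pos hd]
                · rw [if_neg (fun h => hd h.2), if_neg hd, zero_mul]
              rw [Finset.sum_congr rfl this, Finset.sum_ite_mem, inter_eq_right.mpr hA']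
            · rw [if_neg hc]
              apply Finset.sum_eq_zero
              intro d _
              simp only [insert_subset_iff, singleton_subset_iff]
              rw [if_neg (fun h => hc h.1), zero_mul]
          rw [show (∑ c ∈ S, ∑ d ∈ S, (if insert c {d} ⊆ A then (-1 : ℝ)^A.card else 0) * (c * d))
              = ∑ c ∈ S, if c ∈ A then ∑ d ∈ A, (-1 : ℝ)^A.card * (c * d) else 0 from
            Finset.sum_congr rfl fun c _ => outer c]
          rw [Finset.sum_ite_mem, inter_eq_right.mpr hA']
          apply Finset.sum_congr rfl
          intro c _
          rw [Finset.mul_sum]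
      _ = ∑ c ∈ S, ∑ d ∈ S,
            (∑ A ∈ S.powerset, (if insert c {d} ⊆ A then (-1 : ℝ)^A.card else 0)) * (c * d) := by
          rw [Finset.sum_comm]
          apply Finset.sum_congr rfl
          intro c _
          rw [Finset.sum_comm]
          exact Finset.sum_congr rfl fun d _ => (Finset.sum_mul _ _ _).symm
      _ = 0 := by
          apply Finset.sum_eq_zero
          intro c hc
          apply Finset.sum_eq_zero
          intro d hd
          have hsub : insert c {d} ⊆ S := insert_subset hc (singleton_subset_iff.mpr hd)
          have hne : insert c {d} ≠ S := by
            intro h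
            have := card_insert_le c ({d} : Finset ℝ)
            rw [h, hS, card_singleton] at this
            omega
          rw [subsum_zero S _ hsub hne, zero_mul]
  have expand : ∀ A ∈ S.powerset, (-1 : ℝ)^A.card * phiR (∑ c ∈ A, c)
      = ((-1 : ℝ)^A.card * (∑ c ∈ A, c)^2 - (-1 : ℝ)^A.card * (∑ c ∈ A, c)) / 2 := by
    intro A _
    unfold phiR
    ring
  rw [Finset.sum_congr rfl expand, ← Finset.sum_div, Finset.sum_sub_distrib, M1, M2]
  norm_num

open scoped Classical in
/-- The sum, over all weighted configurations of the finite set `S` with total weight `w`, of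
their evaluations.  A weighted configuration is recorded as a length `r` together with an
`r`-tuple `f`, where `(f i).1 = Sᵢ` are the (nonempty, pairwise disjoint, covering `S`) parts
of the configuration and `(f i).2 = wᵢ` are their weights, `∑ i, wᵢ = w`.  Its evaluation is
`(-1)^r · (1/r) · ∏ i, P_{wᵢ}(tᵢ)` where `tᵢ = ∑ c ∈ Sᵢ, c`.  (Since the parts are nonempty and
pairwise disjoint, `r ≤ S.card`, and each weight is at most `w`, so every weighted
configuration occurs exactly once in the sum below.) -/
noncomputable def weightedConfigSum (P : ℕ → Polynomial ℝ) (S : Finset ℝ) (w : ℕ) : ℝ :=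
  ∑ r ∈ Finset.range (S.card + 1),
    ∑ f ∈ (Fintype.piFinset fun _ : Fin r => S.powerset ×ˢ Finset.range (w + 1)).filter
        (fun f => (∀ i, ((f i).1).Nonempty) ∧
          (∀ i j, i ≠ j → Disjoint (f i).1 (f j).1) ∧
          (Finset.univ.biUnion fun i => (f i).1) = S ∧
          ∑ i, (f i).2 = w),
      (-1 : ℝ) ^ r * (1 / (r : ℝ)) * ∏ i, (P (f i).2).eval (∑ c ∈ (f i).1, c)

set_option maxHeartbeats 1600000 in
theorem weighted_config_identity_g5_w1 (P : ℕ → Polynomial ℝ) (hP : IsStirlingPoly P)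
    (S : Finset ℝ) (hS : S.card = 5) :
    weightedConfigSum P S 1 = 0 := by
  classical
  unfold weightedConfigSum
  have perR : ∀ r : ℕ,
      (∑ f ∈ (Fintype.piFinset fun _ : Fin r => S.powerset ×ˢ Finset.range (1 + 1)).filter
        (fun f => (∀ i, ((f i).1).Nonempty) ∧
          (∀ i j, i ≠ j → Disjoint (f i).1 (f j).1) ∧
          (Finset.univ.biUnion fun i => (f i).1) = S ∧
          ∑ i, (f i).2 = 1),
      (-1 : ℝ) ^ r * (1 / (r : ℝ)) * ∏ i, (P (f i).2).eval (∑ c ∈ (f i).1, c))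
      = ∑ A ∈ S.powerset, phiR (∑ c ∈ A, c) *
          ∑ k ∈ Finset.range (r + 1),
            (-1 : ℝ) ^ r * (1 / (r : ℝ)) * (r.choose k : ℝ) * (-1 : ℝ) ^ (r + k) * (k : ℝ) *
              (((k - 1) ^ (S.card - A.card) : ℕ) : ℝ) := by
    intro r
    rw [← Finset.mul_sum, stepA P hP S r, IE S r]
    rw [Finset.sum_congr rfl (fun K _ => by rw [WCdecomp_sum_V S r K])]
    rw [Finset.sum_powerset_apply_card
      (fun k => (-1 : ℝ) ^ (r + k) * ((k : ℝ) * ∑ A ∈ S.powerset,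
        (((k - 1) ^ (S.card - A.card) : ℕ) : ℝ) * phiR (∑ c ∈ A, c)))]
    rw [Finset.card_univ, Fintype.card_fin, Finset.mul_sum]
    simp only [nsmul_eq_mul, Finset.mul_sum]
    rw [Finset.sum_comm]
    apply Finset.sum_congr rfl
    intro A _
    apply Finset.sum_congr rfl
    intro k _
    ring
  rw [Finset.sum_congr rfl (fun r _ => perR r), hS]
  rw [Finset.sum_comm]
  have key : ∀ a : ℕ, 1 ≤ a → a ≤ 5 →
      (∑ r ∈ Finset.range (5 + 1), ∑ k ∈ Finset.range (r + 1),
        (-1 : ℝ) ^ r * (1 / (r : ℝ)) * (r.choose k : ℝ) * (-1 : ℝ) ^ (r + k) * (k : ℝ) *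
          (((k - 1) ^ (5 - a) : ℕ) : ℝ))
      = (-1 : ℝ) ^ a := by
    intro a h1 h5
    interval_cases a <;>
      norm_num [Finset.sum_range_succ, Nat.choose]
  have step : (∑ A ∈ S.powerset, ∑ r ∈ Finset.range (5 + 1), phiR (∑ c ∈ A, c) *
        ∑ k ∈ Finset.range (r + 1),
          (-1 : ℝ) ^ r * (1 / (r : ℝ)) * (r.choose k : ℝ) * (-1 : ℝ) ^ (r + k) * (k : ℝ) *
            (((k - 1) ^ (5 - A.card) : ℕ) : ℝ))
      = ∑ A ∈ S.powerset, (-1 : ℝ) ^ A.card * phiR (∑ c ∈ A, c) := by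
    apply Finset.sum_congr rfl
    intro A hA
    rw [← Finset.mul_sum]
    rcases Finset.eq_empty_or_nonempty A with rfl | hne
    · simp [phiR]
    · have h1 : 1 ≤ A.card := Finset.card_pos.mpr hne
      have h5 : A.card ≤ 5 := hS ▸ Finset.card_le_card (mem_powerset.mp hA)
      rw [key A.card h1 h5, mul_comm]
  rw [step, alt_sum_zero S hS]
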